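/- arXiv:2004.09999 — 3 statements merged into one kernel-verified Lean document; each statement's English description precedes it below -/
import Mathlib

section
/- Minimality of optimal solutions: let (a,b) be partitions of a finite linearly ordered set S and x an optimal solution of the embedding problem (a,b) (for every pair of distinct blocks x_{j₁}, x_{j₂} of x there exist a block a_i of a and distinct blocks b_{k₁} ≠ b_{k₂} of b with a_i ∩ x_{j₁} ∩ b_{k₁} ≠ ∅ and a_i ∩ x_{j₂} ∩ b_{k₂} ≠ ∅). Then for every solution y of (a,b) such that x refines into y (every block of y is a union of blocks of x), x = y. -/
/-- Minimality of optimal solutions: if `x` is an optimal solution of the embedding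
problem `(a,b)` and `y` is a solution into which `x` refines, then `x = y`
(as partitions, i.e. they induce the same equivalence relation on `S`). -/
theorem stmt_14 {S : Type*} [Fintype S] {n m p q : ℕ}
    (a : S → Fin n) (b : S → Fin m) (x : S → Fin p) (y : S → Fin q)
    (ha : Function.Surjective a) (hb : Function.Surjective b)
    (hx : Function.Surjective x) (hy : Function.Surjective y)
    (fx : Fin n × Fin p → Fin m) (hfx : ∀ s, fx (a s, x s) = b s)
    (fy : Fin n × Fin q → Fin m) (hfy : ∀ s, fy (a s, y s) = b s)
    (hopt : ∀ j₁ j₂ : Fin p, j₁ ≠ j₂ →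
      ∃ (i : Fin n) (k₁ k₂ : Fin m), k₁ ≠ k₂ ∧
        (a ⁻¹' {i} ∩ x ⁻¹' {j₁} ∩ b ⁻¹' {k₁}).Nonempty ∧
        (a ⁻¹' {i} ∩ x ⁻¹' {j₂} ∩ b ⁻¹' {k₂}).Nonempty)
    (g : Fin p → Fin q) (hg : g ∘ x = y) :
    ∀ s t : S, x s = x t ↔ y s = y t := by
  intro s t
  constructor
  · intro h
    rw [← hg]
    simp [h]
  · intro h
    by_contra hne
    obtain ⟨i, k₁, k₂, hk, ⟨u, ⟨⟨hua, hux⟩, hub⟩⟩, ⟨v, ⟨⟨hva, hvx⟩, hvb⟩⟩⟩ := hopt _ _ hne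
    simp only [Set.mem_preimage, Set.mem_singleton_iff] at hua hux hub hva hvx hvb
    apply hk
    have hyu : y u = y v := by
      rw [← hg]; simp only [Function.comp_apply, hux, hvx]
      have := congrFun hg s
      have := congrFun hg t
      simp only [Function.comp_apply] at *
      rw [‹g (x s) = y s›, ‹g (x t) = y t›, h]
    calc k₁ = b u := hub.symm
      _ = fy (a u, y u) := (hfy u).symm
      _ = fy (a v, y v) := by rw [hua, hva, hyu]
      _ = b v := hfy v
      _ = k₂ := hvb
end

section
/- Contraction invariance: let a be a partition of finite S and x a partition with blocks {x_j}_{j∈[p]}. If (j₁,j₂) with j₁ ≠ j₂ satisfies: for every block a_i of a, a_i ∩ x_{j₁} ≠ ∅ implies a_i ∩ x_{j₂} = ∅, then a × x = a × x[j₁,j₂], where x[j₁,j₂] is the partition obtained from x by merging blocks x_{j₁} and x_{j₂}. -/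
/-- Contraction invariance: if no block of `a` meets both `x⁻¹(j₁)` and `x⁻¹(j₂)`,
then `a × x = a × x[j₁,j₂]`, where `x[j₁,j₂]` merges the blocks `x⁻¹(j₁)` and
`x⁻¹(j₂)` of `x`. -/
theorem stmt_15 {S : Type*} [Fintype S] {n p : ℕ} (a : S → Fin n) (x : S → Fin p)
    (j₁ j₂ : Fin p) (hne : j₁ ≠ j₂)
    (h : ∀ i : Fin n, (a ⁻¹' {i} ∩ x ⁻¹' {j₁}).Nonempty → a ⁻¹' {i} ∩ x ⁻¹' {j₂} = ∅) :
    ∀ s t : S, (a s = a t ∧ x s = x t) ↔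
      (a s = a t ∧ (x s = x t ∨
        ((x s = j₁ ∨ x s = j₂) ∧ (x t = j₁ ∨ x t = j₂)))) := by
  intro s t
  constructor
  · rintro ⟨ha, hx⟩; exact ⟨ha, Or.inl hx⟩
  · rintro ⟨ha, hx | ⟨hs | hs, ht | ht⟩⟩
    · exact ⟨ha, hx⟩
    · exact ⟨ha, hs.trans ht.symm⟩
    · exfalso
      have := h (a s) ⟨s, rfl, hs⟩
      exact absurd (Set.mem_inter ha.symm ht : t ∈ a ⁻¹' {a s} ∩ x ⁻¹' {j₂}) (by simp [this])
    · exfalso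
      have := h (a t) ⟨t, rfl, ht⟩
      exact absurd (Set.mem_inter ha hs : s ∈ a ⁻¹' {a t} ∩ x ⁻¹' {j₂}) (by simp [this])
    · exact ⟨ha, hs.trans ht.symm⟩
end

section
/- Embedding decomposition II: let a and x be partitions of a finite set S with blocks {a_i}_{i∈[n]} and {x_j}_{j∈[m]} respectively. For every function r : [n] → [m], the common refinement a × x equals a × ∏_{i=1}^n ∏_{j≠r(i)} δ(a_i ∩ x_j). -/
/-- Embedding decomposition II: for any `r : [n] → [m]`,
`a × x = a × ∏ᵢ ∏_{j ≠ r i} δ(aᵢ ∩ xⱼ)` as partitions of `S`. -/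
theorem stmt_17 {S : Type*} [Fintype S] {n m : ℕ} (a : S → Fin n) (x : S → Fin m)
    (ha : Function.Surjective a) (hx : Function.Surjective x)
    (r : Fin n → Fin m) :
    ∀ s t : S, (a s = a t ∧ x s = x t) ↔
      (a s = a t ∧ ∀ (i : Fin n) (j : Fin m), j ≠ r i →
        (s ∈ a ⁻¹' {i} ∩ x ⁻¹' {j} ↔ t ∈ a ⁻¹' {i} ∩ x ⁻¹' {j})) := by
  intro s t
  constructor
  · rintro ⟨h1, h2⟩
    refine ⟨h1, fun i j _ => ?_⟩
    simp [Set.mem_preimage, h1, h2]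
  · rintro ⟨h1, h2⟩
    refine ⟨h1, ?_⟩
    by_cases hs : x s = r (a s)
    · by_cases ht : x t = r (a s)
      · rw [hs, ht]
      · have := (h2 (a s) (x t) ht).mpr ⟨h1.symm, rfl⟩
        exact this.2
    · have := (h2 (a s) (x s) hs).mp ⟨rfl, rfl⟩
      exact this.2.symm
end
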